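/- Let Φ̃ : ℂ⁴∖{0} → ℍ²∖{0} be the map (z₁, z₂, z₃, z₄) ↦ (z₁ + z₂j, z₃ + z₄j). Then: (i) Φ̃ descends to a well-defined map Φ from the complex projective space ℂP³ (the quotient of ℂ⁴∖{0} by nonzero complex scalar multiplication) to the quaternionic projective line ℍP¹ (the quotient of ℍ²∖{0} by left multiplication by nonzero quaternions); (ii) Φ is surjective; and (iii) for every L ∈ ℍP¹ and any nonzero w ∈ ℍ² representing L, the map sending the class of q ∈ ℍ∖{0} modulo left multiplication by ℂ∖{0} to the class in ℂP³ of the ℂ⁴-vector corresponding to q·w is a well-defined bijection onto the fiber Φ⁻¹(L); since (ℍ∖{0})/(ℂ∖{0}) is in bijection with ℂP¹ via z₁ + z₂j ↦ (z₁ : z₂), every fiber of Φ is in bijection with ℂP¹. -/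

import Mathlib

open Quaternion Complex

/-- The complex number `z = a + bI` viewed as the quaternion `a + b·i`. -/
noncomputable def cq (z : ℂ) : ℍ[ℝ] := ⟨z.re, z.im, 0, 0⟩

/-- The quaternion `j`. -/
noncomputable def Qj : ℍ[ℝ] := ⟨0, 0, 1, 0⟩

/-- The identification `ℂ⁴ ≅ ℍ²`, `(z₁, z₂, z₃, z₄) ↦ (z₁ + z₂·j, z₃ + z₄·j)`. -/
noncomputable def quatPair (v : Fin 4 → ℂ) : ℍ[ℝ] × ℍ[ℝ] :=
  (cq (v 0) + cq (v 1) * Qj, cq (v 2) + cq (v 3) * Qj)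

/-- The inverse identification `ℍ² ≅ ℂ⁴`. -/
noncomputable def c4 (p : ℍ[ℝ] × ℍ[ℝ]) : Fin 4 → ℂ :=
  ![(⟨p.1.re, p.1.imI⟩ : ℂ), (⟨p.1.imJ, p.1.imK⟩ : ℂ),
    (⟨p.2.re, p.2.imI⟩ : ℂ), (⟨p.2.imJ, p.2.imK⟩ : ℂ)]

lemma qc_eq (z₁ z₂ : ℂ) : cq z₁ + cq z₂ * Qj = (⟨z₁.re, z₁.im, z₂.re, z₂.im⟩ : ℍ[ℝ]) := by
  ext <;> simp [Quaternion.re_mul, Quaternion.imI_mul, Quaternion.imJ_mul, Quaternion.imK_mul] <;> simp [cq, Qj]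

lemma qc_mul (c z₁ z₂ : ℂ) :
    cq c * (cq z₁ + cq z₂ * Qj) = cq (c*z₁) + cq (c*z₂) * Qj := by
  ext <;> simp [Quaternion.re_mul, Quaternion.imI_mul, Quaternion.imJ_mul, Quaternion.imK_mul] <;> simp [cq, Qj] <;> ring

lemma cq_zero_iff (z : ℂ) : cq z = 0 ↔ z = 0 := by
  constructor
  · intro h; have := congrArg QuaternionAlgebra.re h
    have h2 := congrArg QuaternionAlgebra.imI h
    simp [cq] at this h2
    exact Complex.ext this h2
  · rintro rfl; ext <;> simp [cq]

lemma quatPair_c4 (p : ℍ[ℝ] × ℍ[ℝ]) : quatPair (c4 p) = p := by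
  unfold quatPair c4
  ext <;> simp [qc_eq]

lemma c4_quatPair (v : Fin 4 → ℂ) : c4 (quatPair v) = v := by
  unfold quatPair c4
  funext i
  fin_cases i <;> simp [qc_eq] <;> exact Complex.ext rfl rfl

lemma quatPair_smul (c : ℂ) (v : Fin 4 → ℂ) :
    quatPair (c • v) = cq c • quatPair v := by
  unfold quatPair
  simp only [Prod.smul_def, smul_eq_mul, Pi.smul_apply]
  rw [← qc_mul, ← qc_mul]

lemma c4_zero_iff (p : ℍ[ℝ] × ℍ[ℝ]) : c4 p = 0 ↔ p = 0 := by
  constructor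
  · intro h
    have := quatPair_c4 p
    rw [h] at this
    rw [← this]
    unfold quatPair
    ext <;> simp [qc_eq]
  · rintro rfl
    funext i; fin_cases i <;> simp [c4] <;> exact Complex.ext rfl rfl

lemma quatPair_zero_iff (v : Fin 4 → ℂ) : quatPair v = 0 ↔ v = 0 := by
  rw [← c4_zero_iff, c4_quatPair]

lemma smul_pair_cancel (q q' : ℍ[ℝ]) (w : ℍ[ℝ] × ℍ[ℝ]) (hw : w ≠ 0)
    (h : q • w = q' • w) : q = q' := by
  rw [Prod.ext_iff] at h
  simp only [Prod.smul_fst, Prod.smul_snd, smul_eq_mul] at h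
  have hor : w.1 ≠ 0 ∨ w.2 ≠ 0 := by
    by_contra hc
    push_neg at hc
    exact hw (Prod.ext hc.1 hc.2)
  rcases hor with h1 | h1
  · exact mul_right_cancel₀ h1 h.1
  · exact mul_right_cancel₀ h1 h.2

lemma c4_cq_smul (c : ℂ) (p : ℍ[ℝ] × ℍ[ℝ]) : c4 (cq c • p) = c • c4 p := by
  conv_lhs => rw [← quatPair_c4 p]
  rw [← quatPair_smul, c4_quatPair]

lemma mk_congr {K V : Type*} [DivisionRing K] [AddCommGroup V] [Module K V]
    (v v' : V) (hv : v ≠ 0) (hv' : v' ≠ 0) (h : v = v') :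
    Projectivization.mk K v hv = Projectivization.mk K v' hv' := by
  subst h; rfl

lemma qc_inj (z₁ z₂ u₁ u₂ : ℂ) (h : cq z₁ + cq z₂ * Qj = cq u₁ + cq u₂ * Qj) :
    z₁ = u₁ ∧ z₂ = u₂ := by
  rw [qc_eq, qc_eq] at h
  have h := (QuaternionAlgebra.mk.injEq _ _ _ _ _ _ _ _).mp h
  exact ⟨Complex.ext h.1 h.2.1, Complex.ext h.2.2.1 h.2.2.2⟩

lemma qc_decomp (q : ℍ[ℝ]) :
    q = cq ⟨q.re, q.imI⟩ + cq (⟨q.imJ, q.imK⟩ : ℂ) * Qj := by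
  rw [qc_eq]
  ext <;> rfl

lemma qc_zero_iff (z₁ z₂ : ℂ) : cq z₁ + cq z₂ * Qj = 0 ↔ z₁ = 0 ∧ z₂ = 0 := by
  constructor
  · intro h
    have h2 : cq z₁ + cq z₂ * Qj = cq 0 + cq 0 * Qj := by
      rw [h, qc_eq]; ext <;> simp
    have := qc_inj _ _ _ _ h2
    exact this
  · rintro ⟨rfl, rfl⟩; rw [qc_eq]; ext <;> simp

lemma smul_pair_ne_zero {q : ℍ[ℝ]} {w : ℍ[ℝ] × ℍ[ℝ]} (hq : q ≠ 0) (hw : w ≠ 0) :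
    q • w ≠ 0 := by
  intro h
  apply hw
  have h1 : q * w.1 = 0 ∧ q * w.2 = 0 := by
    constructor
    · exact congrArg Prod.fst h
    · exact congrArg Prod.snd h
  exact Prod.ext ((mul_eq_zero.mp h1.1).resolve_left hq)
    ((mul_eq_zero.mp h1.2).resolve_left hq)

noncomputable def PhiMap : Projectivization ℂ (Fin 4 → ℂ) → Projectivization ℍ[ℝ] (ℍ[ℝ] × ℍ[ℝ]) :=
  fun x => Projectivization.mk ℍ[ℝ] (quatPair x.rep)
    (by rw [Ne, quatPair_zero_iff]; exact x.rep_nonzero)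

lemma Phi_mk (v : Fin 4 → ℂ) (hv : v ≠ 0) (hv' : quatPair v ≠ 0) :
    PhiMap (Projectivization.mk ℂ v hv) = Projectivization.mk ℍ[ℝ] (quatPair v) hv' := by
  obtain ⟨a, ha⟩ := Projectivization.exists_smul_eq_mk_rep ℂ v hv
  unfold PhiMap
  rw [Projectivization.mk_eq_mk_iff']
  refine ⟨cq (a : ℂ), ?_⟩
  rw [← quatPair_smul, ← Units.smul_def, ha]

/-- The map `ℂ⁴∖{0} → ℍ²∖{0}`, `(z₁,z₂,z₃,z₄) ↦ (z₁+z₂j, z₃+z₄j)`, descends to a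
well-defined surjection `Φ : ℂP³ → ℍP¹`, and for every `L ∈ ℍP¹` with nonzero
representative `w ∈ ℍ²`, the map `[q] ↦ [q·w]` is a well-defined bijection from
`ℂP¹ = (ℍ∖{0})/(ℂ∖{0})` onto the fiber `Φ⁻¹(L)`. -/
theorem cp3_fibration_over_hp1 :
    ∃ Φ : Projectivization ℂ (Fin 4 → ℂ) → Projectivization ℍ[ℝ] (ℍ[ℝ] × ℍ[ℝ]),
      (∀ (v : Fin 4 → ℂ) (hv : v ≠ 0) (hv' : quatPair v ≠ 0),
        Φ (Projectivization.mk ℂ v hv) = Projectivization.mk ℍ[ℝ] (quatPair v) hv') ∧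
      Function.Surjective Φ ∧
      (∀ (L : Projectivization ℍ[ℝ] (ℍ[ℝ] × ℍ[ℝ])) (w : ℍ[ℝ] × ℍ[ℝ]) (hw : w ≠ 0),
        Projectivization.mk ℍ[ℝ] w hw = L →
        ∃ β : Projectivization ℂ (ℂ × ℂ) → Projectivization ℂ (Fin 4 → ℂ),
          (∀ (z₁ z₂ : ℂ) (hz : ((z₁, z₂) : ℂ × ℂ) ≠ 0)
              (hc : c4 ((cq z₁ + cq z₂ * Qj) • w) ≠ 0),
            β (Projectivization.mk ℂ ((z₁, z₂) : ℂ × ℂ) hz)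
              = Projectivization.mk ℂ (c4 ((cq z₁ + cq z₂ * Qj) • w)) hc) ∧
          Function.Injective β ∧
          Set.range β = Φ ⁻¹' {L}) := by
  refine ⟨PhiMap, Phi_mk, ?_, ?_⟩
  · intro L
    have h1 : c4 L.rep ≠ 0 := by rw [Ne, c4_zero_iff]; exact L.rep_nonzero
    have h2 : quatPair (c4 L.rep) ≠ 0 := by rw [quatPair_c4]; exact L.rep_nonzero
    refine ⟨Projectivization.mk ℂ (c4 L.rep) h1, ?_⟩
    rw [Phi_mk _ _ h2,
      mk_congr _ L.rep h2 L.rep_nonzero (quatPair_c4 _), Projectivization.mk_rep]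
  · intro L w hw hwL
    have hqc : ∀ x : Projectivization ℂ (ℂ × ℂ),
        (cq x.rep.1 + cq x.rep.2 * Qj) ≠ 0 := by
      intro x
      rw [Ne, qc_zero_iff]
      rintro ⟨h1, h2⟩
      exact x.rep_nonzero (Prod.ext h1 h2)
    have hnz : ∀ x : Projectivization ℂ (ℂ × ℂ),
        c4 ((cq x.rep.1 + cq x.rep.2 * Qj) • w) ≠ 0 := fun x => by
      rw [Ne, c4_zero_iff]; exact smul_pair_ne_zero (hqc x) hw
    set β : Projectivization ℂ (ℂ × ℂ) → Projectivization ℂ (Fin 4 → ℂ) :=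
      fun x => Projectivization.mk ℂ (c4 ((cq x.rep.1 + cq x.rep.2 * Qj) • w)) (hnz x)
      with hβ
    have hβmk : ∀ (z₁ z₂ : ℂ) (hz : ((z₁, z₂) : ℂ × ℂ) ≠ 0)
        (hc : c4 ((cq z₁ + cq z₂ * Qj) • w) ≠ 0),
        β (Projectivization.mk ℂ ((z₁, z₂) : ℂ × ℂ) hz)
          = Projectivization.mk ℂ (c4 ((cq z₁ + cq z₂ * Qj) • w)) hc := by
      intro z₁ z₂ hz hc
      obtain ⟨a, ha⟩ := Projectivization.exists_smul_eq_mk_rep ℂ _ hz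
      have hrep : (Projectivization.mk ℂ ((z₁, z₂) : ℂ × ℂ) hz).rep
          = ((a : ℂ) * z₁, (a : ℂ) * z₂) := by
        rw [← ha]; rfl
      rw [hβ]
      simp only
      rw [Projectivization.mk_eq_mk_iff']
      refine ⟨(a : ℂ), ?_⟩
      rw [← c4_cq_smul, smul_smul, qc_mul, hrep]
    refine ⟨β, hβmk, ?_, ?_⟩
    · intro x y h
      rw [hβ] at h
      simp only at h
      rw [Projectivization.mk_eq_mk_iff'] at h
      obtain ⟨c, hc⟩ := h
      have hc' := congrArg quatPair hc
      rw [quatPair_smul, quatPair_c4, quatPair_c4, smul_smul] at hc'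
      have hmul := smul_pair_cancel _ _ w hw hc'
      rw [qc_mul] at hmul
      obtain ⟨h1, h2⟩ := qc_inj _ _ _ _ hmul
      have hx : c • y.rep = x.rep := by
        apply Prod.ext
        · simpa using h1
        · simpa using h2
      rw [← Projectivization.mk_rep x, ← Projectivization.mk_rep y,
        Projectivization.mk_eq_mk_iff']
      exact ⟨c, hx⟩
    · ext y
      simp only [Set.mem_range, Set.mem_preimage, Set.mem_singleton_iff]
      constructor
      · rintro ⟨x, rfl⟩
        have hp : quatPair (c4 ((cq x.rep.1 + cq x.rep.2 * Qj) • w)) ≠ 0 := by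
          rw [quatPair_c4]; exact smul_pair_ne_zero (hqc x) hw
        rw [hβ]
        simp only
        rw [Phi_mk _ _ hp,
          mk_congr _ _ hp (smul_pair_ne_zero (hqc x) hw) (quatPair_c4 _), ← hwL,
          Projectivization.mk_eq_mk_iff']
        exact ⟨_, rfl⟩
      · intro hy
        have hrep : quatPair y.rep ≠ 0 := by
          rw [Ne, quatPair_zero_iff]; exact y.rep_nonzero
        have h4 : Projectivization.mk ℍ[ℝ] (quatPair y.rep) hrep
            = Projectivization.mk ℍ[ℝ] w hw := by
          rw [hwL]; exact hy
        obtain ⟨q, hq⟩ := (Projectivization.mk_eq_mk_iff' _ _ _ hrep hw).mp h4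
        have hqne : q ≠ 0 := by
          rintro rfl; rw [zero_smul] at hq; exact hrep hq.symm
        have hz : ((⟨q.re, q.imI⟩, ⟨q.imJ, q.imK⟩) : ℂ × ℂ) ≠ 0 := by
          intro h0
          apply hqne
          rw [qc_decomp q, qc_zero_iff]
          exact ⟨congrArg Prod.fst h0, congrArg Prod.snd h0⟩
        have hc : c4 ((cq ⟨q.re, q.imI⟩ + cq (⟨q.imJ, q.imK⟩ : ℂ) * Qj) • w) ≠ 0 := by
          rw [← qc_decomp q, hq, c4_quatPair]
          exact y.rep_nonzero
        refine ⟨Projectivization.mk ℂ _ hz, ?_⟩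
        rw [hβmk _ _ hz hc]
        exact (mk_congr _ y.rep hc y.rep_nonzero
          (by rw [← qc_decomp q, hq, c4_quatPair])).trans (Projectivization.mk_rep y)
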